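/- Suppose (b,c) = (2,2) or (b,c) = (1,4), and let δ = (1,1) if (b,c) = (2,2) and δ = (1,2) if (b,c) = (1,4). Then for every n ≥ 1 the element z_n has denominator vector nδ; that is, z_n = N(y₁,y₂)/(y₁^n·y₂^n) for (b,c) = (2,2), respectively z_n = N(y₁,y₂)/(y₁^n·y₂^{2n}) for (b,c) = (1,4), for some polynomial N ∈ ℤ[y₁,y₂] with constant term 1. -/
import Mathlib


open MvPolynomial Finset

noncomputable section

/-- The ambient field `F = ℚ(y₁, y₂)`. -/
abbrev Fq : Type := FractionRing (MvPolynomial (Fin 2) ℚ)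

/-- The two independent indeterminates of `F`. -/
def gen (i : Fin 2) : Fq := algebraMap (MvPolynomial (Fin 2) ℚ) Fq (X i)

/-- `y : ℤ → Fq` is the family of cluster variables of `A(b,c)`:
`y 1, y 2` are the two indeterminates and the exchange relations hold. -/
def IsClusterSeq (b c : ℕ) (y : ℤ → Fq) : Prop :=
  y 1 = gen 0 ∧ y 2 = gen 1 ∧
    ∀ m : ℤ, y (m - 1) * y (m + 1) = (if Odd m then y m ^ b else y m ^ c) + 1

/-- The cluster algebra `A(b,c)`: the subring of `F` generated by all cluster variables. -/
def clusterAlg (y : ℤ → Fq) : Subring Fq := Subring.closure (Set.range y)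

/-- The cluster variable `y m` as an element of the cluster algebra. -/
def yMem (y : ℤ → Fq) (m : ℤ) : clusterAlg y := ⟨y m, Subring.subset_closure ⟨m, rfl⟩⟩

/-- `f` is (the coefficient function of) a Laurent-polynomial expansion of `x`
in the cluster `{y m, y (m+1)}`. -/
def IsLaurentExp (y : ℤ → Fq) (m : ℤ) (f : ℤ × ℤ →₀ ℤ) (x : Fq) : Prop :=
  x = ∑ γ ∈ f.support, (f γ : Fq) * y m ^ γ.1 * y (m + 1) ^ γ.2

/-- `x` is a positive element: it is nonzero and for every `m` its Laurent expansion in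
`y m, y (m+1)` has nonnegative coefficients. -/
def IsPositive (y : ℤ → Fq) (x : Fq) : Prop :=
  x ≠ 0 ∧ ∀ m : ℤ, ∃ f : ℤ × ℤ →₀ ℤ, (∀ γ, 0 ≤ f γ) ∧ IsLaurentExp y m f x

/-- `x` is a cluster monomial `y m ^ p * y (m+1) ^ q`. -/
def IsClusterMonomial (y : ℤ → Fq) (x : Fq) : Prop :=
  ∃ (m : ℤ) (p q : ℕ), x = y m ^ p * y (m + 1) ^ q

/-- `x` has denominator vector `a = (a₁, a₂)`, i.e. `x = N(y₁,y₂)/(y₁^a₁ y₂^a₂)` with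
`N ∈ ℤ[y₁,y₂]` having constant term `1`. -/
def HasDenomVector (y : ℤ → Fq) (a : ℤ × ℤ) (x : Fq) : Prop :=
  ∃ N : MvPolynomial (Fin 2) ℤ, N.coeff 0 = 1 ∧
    x = MvPolynomial.aeval (fun i : Fin 2 => if i = 0 then y 1 else y 2) N /
        (y 1 ^ a.1 * y 2 ^ a.2)

/-- `B` is a basis of the subring `A` as a `ℤ`-module. -/
def IsZBasisOf (B : Set Fq) (A : Subring Fq) : Prop :=
  LinearIndependent ℤ (fun x : B => (x : Fq)) ∧
    (Submodule.span ℤ B : Set Fq) = (A : Set Fq)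

/-- `x` is a finite linear combination of elements of `B` with nonnegative integer
coefficients. -/
def IsNonnegComb (B : Set Fq) (x : Fq) : Prop :=
  ∃ f : Fq →₀ ℕ, ↑f.support ⊆ B ∧ x = f.sum fun v n => n • v

/-- Normalized Chebyshev polynomials: `T₀ = 1`, `T₁ = t`, `T₂ = t² - 2`,
`T_{n+1} = t T_n - T_{n-1}` for `n ≥ 2`, so `T_n(t + t⁻¹) = tⁿ + t⁻ⁿ` for `n ≥ 1`. -/
def cheb : ℕ → Polynomial ℤ
  | 0 => 1
  | 1 => Polynomial.X
  | 2 => Polynomial.X ^ 2 - 2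
  | n + 3 => Polynomial.X * cheb (n + 2) - cheb (n + 1)

/-- The element `z` in the affine cases: `z = y₀y₃ - y₁y₂` for `(b,c) = (2,2)` and
`z = y₀²y₃ - (y₁+2)y₂²` for `(b,c) = (1,4)`. -/
def zElem (b : ℕ) (y : ℤ → Fq) : Fq :=
  if b = 2 then y 0 * y 3 - y 1 * y 2
  else y 0 ^ 2 * y 3 - (y 1 + 2) * y 2 ^ 2

/-- `z_n = T_n(z)` (so `z_0 = 1`). -/
def zn (b : ℕ) (y : ℤ → Fq) (n : ℕ) : Fq := Polynomial.aeval (zElem b y) (cheb n)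

/-- `z_j` for integer index, with the convention `z_j = 0` for `j < 0`. -/
def znI (b : ℕ) (y : ℤ → Fq) (j : ℤ) : Fq := if j < 0 then 0 else zn b y j.toNat

/-- A lattice point viewed in `ℝ²`. -/
def toR (γ : ℤ × ℤ) : ℝ × ℝ := ((γ.1 : ℝ), (γ.2 : ℝ))

/-- The Newton polygon of a Laurent expansion: the convex hull of its support. -/
def newt (f : ℤ × ℤ →₀ ℤ) : Set (ℝ × ℝ) := convexHull ℝ (toR '' ↑f.support)

/-- The expansion `f` is monic: every vertex (extreme point) of its Newton polygon
carries coefficient `1`. -/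
def IsMonicExp (f : ℤ × ℤ →₀ ℤ) : Prop :=
  ∀ γ : ℤ × ℤ, toR γ ∈ Set.extremePoints ℝ (newt f) → f γ = 1

/-- The triangle `Δ(a)` with vertices `(-a₁,-a₂)`, `(-a₁+b a₂, -a₂)`, `(-a₁, -a₂+c a₁)`. -/
def tri (b c : ℕ) (a : ℤ × ℤ) : Set (ℝ × ℝ) :=
  convexHull ℝ
    {toR (-a.1, -a.2), toR (-a.1 + (b : ℤ) * a.2, -a.2), toR (-a.1, -a.2 + (c : ℤ) * a.1)}

/-- The simple reflection `s₁`. -/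
def s1 (b : ℕ) (v : ℤ × ℤ) : ℤ × ℤ := (-v.1 + (b : ℤ) * v.2, v.2)

/-- The simple reflection `s₂`. -/
def s2 (c : ℕ) (v : ℤ × ℤ) : ℤ × ℤ := (v.1, (c : ℤ) * v.1 - v.2)

/-- `a` is a positive real root: it has nonnegative coordinates and lies in the orbit of
`(1,0)` or `(0,1)` under the group generated by `s₁` and `s₂` (since `s₁, s₂` are
involutions, this orbit is the set of values of words in `s₁, s₂` applied to `(1,0)`
or `(0,1)`). -/
def IsPosRealRoot (b c : ℕ) (a : ℤ × ℤ) : Prop :=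
  0 ≤ a.1 ∧ 0 ≤ a.2 ∧
    ∃ (w : List Bool) (e : ℤ × ℤ), (e = (1, 0) ∨ e = (0, 1)) ∧
      a = w.foldr (fun t v => if t then s1 b v else s2 c v) e

/-- `a` is a positive imaginary root. -/
def IsPosImagRoot (b c : ℕ) (a : ℤ × ℤ) : Prop :=
  0 < a.1 ∧ 0 < a.2 ∧ (c : ℤ) * a.1 ^ 2 - (b : ℤ) * c * a.1 * a.2 + (b : ℤ) * a.2 ^ 2 ≤ 0

/-- Numerator sequence: `P 0 = 2`, `P 1 = S`, `P (n+2) = S P(n+1) - D² P n`. -/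
def Pseq (S D : MvPolynomial (Fin 2) ℤ) : ℕ → MvPolynomial (Fin 2) ℤ
  | 0 => 2
  | 1 => S
  | n + 2 => S * Pseq S D (n + 1) - D ^ 2 * Pseq S D n

lemma Pseq_constantCoeff (S D : MvPolynomial (Fin 2) ℤ)
    (hS : constantCoeff S = 1) (hD : constantCoeff D = 0) :
    ∀ n : ℕ, constantCoeff (Pseq S D (n + 1)) = 1 := by
  intro n
  induction n with
  | zero => simpa [Pseq] using hS
  | succ n ih =>
    show constantCoeff (Pseq S D (n + 2)) = 1
    rw [Pseq]
    simp [map_sub, map_mul, map_pow, hS, hD, ih]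

/-- `z_n` with the convention `z_0 = 2`. -/
def wseq (z : Fq) : ℕ → Fq := fun n => if n = 0 then 2 else Polynomial.aeval z (cheb n)

lemma wseq_rec (z : Fq) : ∀ n : ℕ, wseq z (n + 2) = z * wseq z (n + 1) - wseq z n := by
  intro n
  cases n with
  | zero => simp [wseq, cheb, map_ofNat]; ring
  | succ n =>
    show wseq z (n + 3) = _
    simp only [wseq, Nat.succ_ne_zero, if_neg, Nat.add_eq_zero, and_false, ite_false]
    rw [cheb]
    simp [map_sub, map_mul]

lemma key_lemma (z d : Fq) (S D : MvPolynomial (Fin 2) ℤ) (v : Fin 2 → Fq)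
    (hz : z * d = aeval v S) (hd : aeval v D = d) :
    ∀ n : ℕ, wseq z n * d ^ n = aeval v (Pseq S D n) := by
  have H : ∀ n : ℕ, wseq z n * d ^ n = aeval v (Pseq S D n) ∧
      wseq z (n + 1) * d ^ (n + 1) = aeval v (Pseq S D (n + 1)) := by
    intro n
    induction n with
    | zero =>
      constructor
      · simp [wseq, Pseq]
      · simpa [wseq, Pseq, cheb] using hz
    | succ n ih =>
      obtain ⟨ih1, ih2⟩ := ih
      refine ⟨ih2, ?_⟩
      show wseq z (n + 2) * d ^ (n + 2) = aeval v (Pseq S D (n + 2))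
      rw [wseq_rec, Pseq]
      simp only [map_sub, map_mul, map_pow, hd]
      linear_combination (wseq z (n + 1) * d ^ (n + 1)) * hz + aeval v S * ih2 -
        d ^ 2 * ih1
  exact fun n => (H n).1

lemma coeff_zero_eq_one_of_constantCoeff (N : MvPolynomial (Fin 2) ℤ)
    (h : constantCoeff N = 1) : N.coeff 0 = 1 := h

/-- in the affine cases, `z_n` has denominator vector `n·δ`, where
`δ = (1,1)` for `(b,c) = (2,2)` and `δ = (1,2)` for `(b,c) = (1,4)`. -/
theorem stmt_9 (b c : ℕ) (haff : (b = 2 ∧ c = 2) ∨ (b = 1 ∧ c = 4))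
    (y : ℤ → Fq) (hy : IsClusterSeq b c y) (n : ℕ) (hn : 1 ≤ n) :
    HasDenomVector y (if b = 2 then ((n : ℤ), (n : ℤ)) else ((n : ℤ), 2 * (n : ℤ)))
      (zn b y n) := by
  obtain ⟨h1, h2, hrel⟩ := hy
  have hinj : Function.Injective (algebraMap (MvPolynomial (Fin 2) ℚ) Fq) :=
    IsFractionRing.injective _ _
  have hy1 : y 1 ≠ 0 := by
    rw [h1]; unfold gen
    exact (map_ne_zero_iff _ hinj).mpr (X_ne_zero (R := ℚ) (0 : Fin 2))
  have hy2 : y 2 ≠ 0 := by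
    rw [h2]; unfold gen
    exact (map_ne_zero_iff _ hinj).mpr (X_ne_zero (R := ℚ) (1 : Fin 2))
  have hodd1 : Odd (1 : ℤ) := odd_one
  have hodd2 : ¬ Odd (2 : ℤ) := by decide
  have e1 := hrel 1
  have e2 := hrel 2
  rw [if_pos hodd1] at e1
  rw [if_neg hodd2] at e2
  norm_num at e1 e2
  rcases haff with ⟨hb, hc⟩ | ⟨hb, hc⟩
  · subst hb; subst hc
    -- case (b,c) = (2,2)
    set v : Fin 2 → Fq := fun i => if i = 0 then y 1 else y 2 with hv
    have hv0 : v 0 = y 1 := by simp [hv]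
    have hv1 : v 1 = y 2 := by simp [hv]
    set S : MvPolynomial (Fin 2) ℤ := X 0 ^ 2 + X 1 ^ 2 + 1 with hSdef
    set D : MvPolynomial (Fin 2) ℤ := X 0 * X 1 with hDdef
    set d : Fq := y 1 * y 2 with hddef
    have hd : aeval v D = d := by simp [hDdef, hv0, hv1, hddef]
    have hz : zElem 2 y * d = aeval v S := by
      have hSv : aeval v S = y 1 ^ 2 + y 2 ^ 2 + 1 := by
        simp [hSdef, hv0, hv1]
      rw [hSv, zElem, if_pos rfl, hddef]
      linear_combination (y 1 * y 3) * e1 + (y 1 ^ 2 + 1) * e2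
    have hkey := key_lemma (zElem 2 y) d S D v hz hd n
    have hdn : d ^ n ≠ 0 := pow_ne_zero _ (mul_ne_zero hy1 hy2)
    refine ⟨Pseq S D n, ?_, ?_⟩
    · obtain ⟨m, rfl⟩ := Nat.exists_eq_add_of_le' hn
      rw [← constantCoeff_eq]
      exact Pseq_constantCoeff S D (by simp [hSdef]) (by simp [hDdef]) m
    · have hwn : wseq (zElem 2 y) n = zn 2 y n := by
        rw [wseq, if_neg (by omega), zn]
      rw [if_pos rfl]
      show zn 2 y n = _ / (y 1 ^ (n : ℤ) * y 2 ^ (n : ℤ))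
      have hden : y 1 ^ (n : ℤ) * y 2 ^ (n : ℤ) = d ^ n := by
        rw [zpow_natCast, zpow_natCast, hddef, mul_pow]
      rw [hden, eq_div_iff hdn, ← hwn]
      exact hkey
  · subst hb; subst hc
    -- case (b,c) = (1,4)
    set v : Fin 2 → Fq := fun i => if i = 0 then y 1 else y 2 with hv
    have hv0 : v 0 = y 1 := by simp [hv]
    have hv1 : v 1 = y 2 := by simp [hv]
    set S : MvPolynomial (Fin 2) ℤ := X 1 ^ 4 + (X 0 + 1) ^ 2 with hSdef
    set D : MvPolynomial (Fin 2) ℤ := X 0 * X 1 ^ 2 with hDdef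
    set d : Fq := y 1 * y 2 ^ 2 with hddef
    have hd : aeval v D = d := by simp [hDdef, hv0, hv1, hddef]
    have hz : zElem 1 y * d = aeval v S := by
      have hSv : aeval v S = y 2 ^ 4 + (y 1 + 1) ^ 2 := by
        simp [hSdef, hv0, hv1]
      rw [hSv, zElem, if_neg (by norm_num), hddef]
      linear_combination ((y 0 * y 2 + y 1 + 1) * (y 1 * y 3)) * e1 + (y 1 + 1) ^ 2 * e2
    have hkey := key_lemma (zElem 1 y) d S D v hz hd n
    have hdn : d ^ n ≠ 0 := pow_ne_zero _ (mul_ne_zero hy1 (pow_ne_zero _ hy2))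
    refine ⟨Pseq S D n, ?_, ?_⟩
    · obtain ⟨m, rfl⟩ := Nat.exists_eq_add_of_le' hn
      rw [← constantCoeff_eq]
      exact Pseq_constantCoeff S D (by simp [hSdef]) (by simp [hDdef]) m
    · have hwn : wseq (zElem 1 y) n = zn 1 y n := by
        rw [wseq, if_neg (by omega), zn]
      rw [if_neg (by norm_num)]
      show zn 1 y n = _ / (y 1 ^ (n : ℤ) * y 2 ^ (2 * (n : ℤ)))
      have hden : y 1 ^ (n : ℤ) * y 2 ^ (2 * (n : ℤ)) = d ^ n := by
        rw [zpow_natCast, show (2 * (n : ℤ)) = ((2 * n : ℕ) : ℤ) by push_cast; ring,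
          zpow_natCast, hddef]
        ring
      rw [hden, eq_div_iff hdn, ← hwn]
      exact hkey
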